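/- arXiv:1209.2667 — 2 statements merged into one kernel-verified Lean document; each statement's English description precedes it below -/
import Mathlib

section
/- With uniform probability on all C(m,g) possible g-subsets arriving at each independent step, the expected number of groups needed to collect all m coupon types equals Σ_{k=1}^{m−g} (-1)^{k+1} C(m,k)/(1 − C(m−k,g)/C(m,g)) + Σ_{k=1}^{g} (-1)^{m−g+k+1} C(m, m−g+k). -/
open Finset MeasureTheory ProbabilityTheory
open scoped ENNReal

lemma nm_restrict' {Ω : Type*} [MeasurableSpace Ω] {μ : Measure Ω} {s : Set Ω}
    (h : NullMeasurableSet s μ) (u : Set Ω) : NullMeasurableSet s (μ.restrict u) := by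
  obtain ⟨t, htm, hst⟩ := h
  exact ⟨t, htm, hst.filter_mono (MeasureTheory.ae_mono Measure.restrict_le_self)⟩

lemma ie_compl' {Ω ι : Type*} [MeasurableSpace Ω] [DecidableEq ι]
    (A : ι → Set Ω) (s : Finset ι) :
    ∀ (μ : Measure Ω) [IsFiniteMeasure μ], (∀ i ∈ s, NullMeasurableSet (A i) μ) →
      (μ (⋂ i ∈ s, (A i)ᶜ)).toReal
        = ∑ T ∈ s.powerset, (-1 : ℝ) ^ T.card * (μ (⋂ i ∈ T, A i)).toReal := by
  induction s using Finset.induction_on with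
  | empty => intro μ _ _; simp
  | @insert a s ha IH =>
    intro μ _ hA
    have hAa : NullMeasurableSet (A a) μ := hA a (Finset.mem_insert_self a s)
    have hAs : ∀ i ∈ s, NullMeasurableSet (A i) μ := fun i hi => hA i (Finset.mem_insert_of_mem hi)
    have hsplit : ∀ T : Set Ω, (μ ((A a)ᶜ ∩ T)).toReal = (μ T).toReal - (μ (A a ∩ T)).toReal := by
      intro T
      have h1 : μ (T ∩ A a) + μ (T \ A a) = μ T := measure_inter_add_diff₀ T hAa
      have h2 : (μ (T ∩ A a)).toReal + (μ (T \ A a)).toReal = (μ T).toReal := by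
        rw [← ENNReal.toReal_add (measure_ne_top _ _) (measure_ne_top _ _), h1]
      have h3 : (A a)ᶜ ∩ T = T \ A a := by rw [Set.diff_eq, Set.inter_comm]
      have h4 : A a ∩ T = T ∩ A a := Set.inter_comm _ _
      rw [h3, h4]; linarith
    have hres : ∀ i ∈ s, NullMeasurableSet (A i) (μ.restrict (A a)) :=
      fun i hi => nm_restrict' (hAs i hi) _
    have IH1 := IH μ hAs
    have IH2 := IH (μ.restrict (A a)) hres
    have hrw : ∀ T : Set Ω, (μ.restrict (A a)) T = μ (A a ∩ T) := by
      intro T; rw [Measure.restrict_apply₀' hAa, Set.inter_comm]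
    simp only [hrw] at IH2
    have hdisj : Disjoint s.powerset (s.powerset.image (insert a)) := by
      rw [Finset.disjoint_left]
      intro T hT hT'
      obtain ⟨T', _, rfl⟩ := Finset.mem_image.mp hT'
      exact ha (Finset.mem_powerset.mp hT (Finset.mem_insert_self a T'))
    have hinj : ∀ x ∈ s.powerset, ∀ y ∈ s.powerset, insert a x = insert a y → x = y := by
      intro x hx y hy h
      have hax : a ∉ x := fun h' => ha (Finset.mem_powerset.mp hx h')
      have hay : a ∉ y := fun h' => ha (Finset.mem_powerset.mp hy h')
      rw [← Finset.erase_insert hax, ← Finset.erase_insert hay, h]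
    rw [Finset.set_biInter_insert, hsplit, IH1, IH2, Finset.powerset_insert,
      Finset.sum_union hdisj, Finset.sum_image hinj]
    have hcongr : ∑ T ∈ s.powerset, (-1:ℝ)^(insert a T).card * (μ (⋂ i ∈ insert a T, A i)).toReal
        = ∑ T ∈ s.powerset, -((-1:ℝ)^T.card * (μ (A a ∩ ⋂ i ∈ T, A i)).toReal) := by
      refine Finset.sum_congr rfl fun T hT => ?_
      have haT : a ∉ T := fun h' => ha (Finset.mem_powerset.mp hT h')
      rw [Finset.card_insert_of_notMem haT, Finset.set_biInter_insert, pow_succ]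
      ring
    rw [hcongr, Finset.sum_neg_distrib]
    ring

/-- Uniform group coupon collector: at each step an i.i.d. uniformly random
`g`-element subset of `{1,...,m}` arrives.  The expected number of groups needed
for every element to have appeared equals
`∑_{k=1}^{m-g} (-1)^(k+1) C(m,k)/(1 - C(m-k,g)/C(m,g)) + ∑_{k=1}^{g} (-1)^(m-g+k+1) C(m, m-g+k)`. -/
theorem stmt_10 {Ω : Type*} [MeasurableSpace Ω] (μ : Measure Ω) [IsProbabilityMeasure μ]
    {m g : ℕ} (hg1 : 1 ≤ g) (hgm : g < m)
    (G : ℕ → Ω → Finset (Fin m)) (hcard : ∀ n ω, (G n ω).card = g)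
    (hindep : iIndepFun (m := fun _ => (⊤ : MeasurableSpace (Finset (Fin m)))) G μ)
    (hunif : ∀ n, 1 ≤ n → ∀ A : Finset (Fin m), A.card = g →
      μ {ω | G n ω = A} = ENNReal.ofReal (1 / (m.choose g)))
    (X : Ω → ℕ)
    (hX : ∀ ω, X ω = sInf {n | 1 ≤ n ∧ ∀ i, ∃ k, 1 ≤ k ∧ k ≤ n ∧ i ∈ G k ω}) :
    ∫ ω, (X ω : ℝ) ∂μ =
      (∑ k ∈ Finset.Icc 1 (m - g), (-1 : ℝ) ^ (k + 1) * (m.choose k) /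
        (1 - ((m - k).choose g : ℝ) / (m.choose g))) +
      ∑ k ∈ Finset.Icc 1 g, (-1 : ℝ) ^ (m - g + k + 1) * (m.choose (m - g + k)) := by
  classical
  have hgm' : g ≤ m := le_of_lt hgm
  set N := m.choose g with hNdef
  have hN : 0 < N := Nat.choose_pos hgm'
  have hNr : (0:ℝ) < (N:ℝ) := by exact_mod_cast hN
  set p : ℝ≥0∞ := (N : ℝ≥0∞)⁻¹ with hpdef
  have hpne : p ≠ ∞ := by
    simp [hpdef, ENNReal.inv_ne_top, Nat.cast_ne_zero, hN.ne']
  have hunif' : ∀ k, 1 ≤ k → ∀ A : Finset (Fin m), A.card = g → μ {ω | G k ω = A} = p := by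
    intro k hk A hA
    rw [hunif k hk A hA, one_div, ENNReal.ofReal_inv_of_pos hNr, ENNReal.ofReal_natCast]
  -- null measurability of atoms
  have nm_atom : ∀ k, 1 ≤ k → ∀ A : Finset (Fin m), NullMeasurableSet {ω | G k ω = A} μ := by
    intro k hk A
    by_cases hA : A.card = g
    · set E := {ω | G k ω = A} with hEdef
      have hE : μ E = p := hunif' k hk A hA
      have hAmem : A ∈ Finset.powersetCard g (univ : Finset (Fin m)) :=
        Finset.mem_powersetCard.mpr ⟨Finset.subset_univ _, hA⟩
      have hEc : μ Eᶜ ≤ ((N - 1 : ℕ) : ℝ≥0∞) * p := by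
        have hsub : Eᶜ ⊆ ⋃ B ∈ ((Finset.powersetCard g (univ : Finset (Fin m))).erase A : Finset (Finset (Fin m))),
            {ω | G k ω = B} := by
          intro ω hω
          simp only [Set.mem_compl_iff, hEdef, Set.mem_setOf_eq] at hω
          refine Set.mem_biUnion (Finset.mem_erase.mpr ⟨hω, ?_⟩) rfl
          exact Finset.mem_powersetCard.mpr ⟨Finset.subset_univ _, hcard k ω⟩
        calc μ Eᶜ ≤ ∑ B ∈ (Finset.powersetCard g (univ : Finset (Fin m))).erase A, μ {ω | G k ω = B} :=
              (measure_mono hsub).trans (measure_biUnion_finset_le _ _)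
          _ = ∑ B ∈ (Finset.powersetCard g (univ : Finset (Fin m))).erase A, p :=
              Finset.sum_congr rfl fun B hB => hunif' k hk B
                (Finset.mem_powersetCard.mp (Finset.mem_of_mem_erase hB)).2
          _ = ((N - 1 : ℕ) : ℝ≥0∞) * p := by
              rw [Finset.sum_const, nsmul_eq_mul, Finset.card_erase_of_mem hAmem,
                Finset.card_powersetCard, Finset.card_univ, Fintype.card_fin]
      set T1 := toMeasurable μ E with hT1
      set T2 := toMeasurable μ Eᶜ with hT2
      have hu : (1:ℝ≥0∞) ≤ μ (T1 ∪ T2) := by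
        calc (1:ℝ≥0∞) = μ Set.univ := measure_univ.symm
          _ ≤ μ (T1 ∪ T2) := measure_mono (by
              intro ω _
              by_cases hω : ω ∈ E
              · exact Or.inl (subset_toMeasurable μ E hω)
              · exact Or.inr (subset_toMeasurable μ Eᶜ hω))
      have hsum : μ T1 + μ T2 ≤ 1 := by
        rw [hT1, hT2, measure_toMeasurable, measure_toMeasurable, hE]
        calc p + μ Eᶜ ≤ p + ((N - 1 : ℕ) : ℝ≥0∞) * p := add_le_add_right hEc _
          _ = (1 + ((N - 1 : ℕ) : ℝ≥0∞)) * p := by ring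
          _ = ((N : ℕ) : ℝ≥0∞) * p := by
              rw [← Nat.cast_one, ← Nat.cast_add]
              congr 1
              exact_mod_cast by omega
          _ = 1 := ENNReal.mul_inv_cancel (by exact_mod_cast hN.ne') (ENNReal.natCast_ne_top N)
      have hnull : μ (T1 ∩ T2) = 0 := by
        have hkey : μ (T1 ∪ T2) + μ (T1 ∩ T2) = μ T1 + μ T2 :=
          measure_union_add_inter T1 (measurableSet_toMeasurable μ Eᶜ)
        have hle : 1 + μ (T1 ∩ T2) ≤ 1 := by
          calc 1 + μ (T1 ∩ T2) ≤ μ (T1 ∪ T2) + μ (T1 ∩ T2) := add_le_add_left hu _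
            _ = μ T1 + μ T2 := hkey
            _ ≤ 1 := hsum
        have := ENNReal.le_of_add_le_add_left (by simp : (1:ℝ≥0∞) ≠ ∞)
          (by simpa using hle : 1 + μ (T1 ∩ T2) ≤ 1 + 0)
        simpa using this
      refine ⟨T1, measurableSet_toMeasurable μ E, ?_⟩
      rw [MeasureTheory.ae_eq_set]
      constructor
      · have h1 : E \ T1 = ∅ := Set.diff_eq_empty.mpr (subset_toMeasurable μ E)
        rw [h1]; exact measure_empty
      · refine measure_mono_null ?_ hnull
        rintro ω ⟨hωT1, hωE⟩
        exact ⟨hωT1, subset_toMeasurable μ Eᶜ hωE⟩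
    · have h1 : {ω | G k ω = A} = ∅ := by
        rw [Set.eq_empty_iff_forall_notMem]
        intro ω hω
        exact hA (by rw [← hω]; exact hcard k ω)
      rw [h1]; exact nullMeasurableSet_empty
  have nm_pre : ∀ k, 1 ≤ k → ∀ P : Set (Finset (Fin m)), NullMeasurableSet (G k ⁻¹' P) μ := by
    intro k hk P
    have h1 : G k ⁻¹' P = ⋃ A ∈ P, {ω | G k ω = A} := by
      ext ω
      simp only [Set.mem_preimage, Set.mem_iUnion, Set.mem_setOf_eq, exists_prop]
      exact ⟨fun h => ⟨G k ω, h, rfl⟩, fun ⟨A, hA, hGA⟩ => hGA ▸ hA⟩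
    rw [h1]
    exact NullMeasurableSet.biUnion (Set.to_countable P) (fun A _ => nm_atom k hk A)
  -- single step probability
  have single : ∀ k, 1 ≤ k → ∀ S : Finset (Fin m),
      μ {ω | ∀ i ∈ S, i ∉ G k ω} = ((m - S.card).choose g : ℝ≥0∞) * p := by
    intro k hk S
    have hset : {ω | ∀ i ∈ S, i ∉ G k ω}
        = ⋃ B ∈ (Finset.powersetCard g ((univ : Finset (Fin m)) \ S) : Finset (Finset (Fin m))),
            {ω | G k ω = B} := by
      ext ω
      simp only [Set.mem_setOf_eq, Set.mem_iUnion, exists_prop]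
      constructor
      · intro h
        refine ⟨G k ω, Finset.mem_powersetCard.mpr ⟨?_, hcard k ω⟩, rfl⟩
        intro x hx
        exact Finset.mem_sdiff.mpr ⟨Finset.mem_univ x, fun hxS => h x hxS hx⟩
      · rintro ⟨B, hB, hGB⟩ i hiS hiG
        have := (Finset.mem_powersetCard.mp hB).1 (hGB ▸ hiG)
        exact (Finset.mem_sdiff.mp this).2 hiS
    rw [hset, measure_biUnion_finset₀ ?_ ?_]
    · rw [Finset.sum_congr rfl (fun B hB => hunif' k hk B (Finset.mem_powersetCard.mp hB).2),
        Finset.sum_const, nsmul_eq_mul]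
      congr 1
      rw [Finset.card_powersetCard, Finset.card_sdiff_of_subset (Finset.subset_univ S),
        Finset.card_univ, Fintype.card_fin]
    · intro B1 h1 B2 h2 hne
      refine Disjoint.aedisjoint (Set.disjoint_left.mpr ?_)
      intro ω hω1 hω2
      exact hne (by rw [← hω1, ← hω2])
    · exact fun B _ => nm_atom k hk B
  -- the uncovered sets
  set V : Fin m → ℕ → Set Ω := fun i n => {ω | ∀ k ∈ Finset.Icc 1 n, i ∉ G k ω} with hVdef
  have hVnm : ∀ (i : Fin m) (n : ℕ), NullMeasurableSet (V i n) μ := by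
    intro i n
    have h1 : V i n = ⋂ k ∈ Finset.Icc 1 n, {ω | i ∉ G k ω} := by
      ext ω; simp [hVdef]
    rw [h1]
    exact NullMeasurableSet.biInter (Finset.Icc 1 n).countable_toSet
      (fun k hk => nm_pre k (Finset.mem_Icc.mp hk).1 {A | i ∉ A})
  have hW : ∀ (n : ℕ) (S : Finset (Fin m)),
      μ (⋂ i ∈ S, V i n) = (((m - S.card).choose g : ℝ≥0∞) * p) ^ n := by
    intro n S
    have hswap : ⋂ i ∈ S, V i n = ⋂ k ∈ Finset.Icc 1 n, {ω | ∀ i ∈ S, i ∉ G k ω} := by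
      ext ω
      simp only [Set.mem_iInter, Set.mem_setOf_eq, hVdef]
      exact ⟨fun h k hk i hi => h i hi k hk, fun h i hi k hk => h k hk i hi⟩
    have hmeas : ∀ k ∈ Finset.Icc 1 n,
        MeasurableSet[(⊤ : MeasurableSpace (Finset (Fin m))).comap (G k)]
          {ω | ∀ i ∈ S, i ∉ G k ω} :=
      fun k _ => ⟨{A | ∀ i ∈ S, i ∉ A}, trivial, rfl⟩
    rw [hswap, hindep.meas_biInter hmeas,
      Finset.prod_congr rfl (fun k hk => single k (Finset.mem_Icc.mp hk).1 S),
      Finset.prod_const, Nat.card_Icc]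
    simp
  set U : ℕ → Set Ω := fun n => ⋃ i, V i n with hUdef
  have hUnm : ∀ n, NullMeasurableSet (U n) μ := fun n =>
    NullMeasurableSet.iUnion (fun i => hVnm i n)
  -- the real-valued per-step quantity
  set r : ℕ → ℝ := fun j => ((m - j).choose g : ℝ) / N with hrdef
  set F : ℕ → ℝ := fun n => ∑ j ∈ Finset.Icc 1 m,
    (-1:ℝ)^(j+1) * (m.choose j) * (r j)^n with hFdef
  have hlt1 : (m-1).choose g < N := by
    have hm' : m - 1 + 1 = m := by omega
    have hg' : g - 1 + 1 = g := by omega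
    have hrec : m.choose g = (m-1).choose (g-1) + (m-1).choose g := by
      conv_lhs => rw [← hm', ← hg']
      rw [Nat.choose_succ_succ, Nat.succ_eq_add_one, hg']
    have hpos : 0 < (m-1).choose (g-1) := Nat.choose_pos (by omega)
    omega
  have hUc : ∀ n, (μ (U n)).toReal = F n := by
    intro n
    have hcompl : (U n)ᶜ = ⋂ i ∈ (univ : Finset (Fin m)), (V i n)ᶜ := by
      simp [hUdef, Set.compl_iUnion]
    have hIE := ie_compl' (fun i => V i n) univ μ (fun i _ => hVnm i n)
    rw [← hcompl] at hIE
    have hterm : ∀ T : Finset (Fin m), (μ (⋂ i ∈ T, V i n)).toReal = (r T.card)^n := by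
      intro T
      rw [hW n T, ENNReal.toReal_pow, ENNReal.toReal_mul, ENNReal.toReal_natCast, hpdef,
        ENNReal.toReal_inv, ENNReal.toReal_natCast]
      simp [hrdef, div_eq_mul_inv]
    have hps : ∑ T ∈ (univ : Finset (Fin m)).powerset, (-1:ℝ)^T.card * (r T.card)^n
        = ∑ j ∈ Finset.range (m+1), (m.choose j) • ((-1:ℝ)^j * (r j)^n) := by
      have h := Finset.sum_powerset_apply_card (f := fun j => (-1:ℝ)^j * (r j)^n)
        (x := (univ : Finset (Fin m)))
      rw [Finset.card_univ, Fintype.card_fin] at h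
      exact h
    have hcomp : (μ (U n)).toReal = 1 - (μ (U n)ᶜ).toReal := by
      have h1 : μ (U n) + μ (U n)ᶜ = 1 := by
        rw [measure_add_measure_compl₀ (hUnm n), measure_univ]
      have h2 : (μ (U n)).toReal + (μ (U n)ᶜ).toReal = 1 := by
        rw [← ENNReal.toReal_add (measure_ne_top _ _) (measure_ne_top _ _), h1]; simp
      linarith
    rw [hcomp, hIE]
    simp only [hterm]
    rw [hps]
    have hrange : Finset.range (m+1) = insert 0 (Finset.Icc 1 m) := by
      ext x; simp only [Finset.mem_range, Finset.mem_insert, Finset.mem_Icc]; omega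
    rw [hrange, Finset.sum_insert (by simp)]
    have hr0 : r 0 = 1 := by
      rw [hrdef]
      simp only [Nat.sub_zero]
      exact div_self hNr.ne'
    simp only [hr0, Nat.choose_zero_right, pow_zero, one_pow, one_smul, one_mul, nsmul_eq_mul]
    have hneg : ∀ j ∈ Finset.Icc 1 m,
        ((m.choose j : ℝ)) * ((-1:ℝ)^j * (r j)^n) = -((-1:ℝ)^(j+1) * (m.choose j) * (r j)^n) :=
      fun j _ => by ring
    rw [Finset.sum_congr rfl hneg, Finset.sum_neg_distrib, hFdef]
    ring
  -- relation to X
  have hZ : μ (⋂ n, U n) = 0 := by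
    have hpne0 : p ≠ 0 := by
      rw [hpdef]
      exact ENNReal.inv_ne_zero.mpr (ENNReal.natCast_ne_top N)
    have hq1 : ((m-1).choose g : ℝ≥0∞) * p < 1 := by
      calc ((m-1).choose g : ℝ≥0∞) * p < (N:ℝ≥0∞) * p := by
            refine ENNReal.mul_lt_mul_left hpne0 hpne ?_
            exact_mod_cast hlt1
        _ = 1 := ENNReal.mul_inv_cancel (by exact_mod_cast hN.ne') (ENNReal.natCast_ne_top N)
    have hZle : ∀ j : ℕ, μ (⋂ n, U n) ≤ (m : ℝ≥0∞) * (((m-1).choose g : ℝ≥0∞) * p) ^ j := by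
      intro j
      calc μ (⋂ n, U n) ≤ μ (U j) := measure_mono (Set.iInter_subset _ j)
        _ ≤ ∑' i : Fin m, μ (V i j) := by
            refine le_trans (le_of_eq (by rw [hUdef])) (measure_iUnion_le _)
        _ = ∑ i : Fin m, μ (V i j) := tsum_fintype _
        _ = ∑ _i : Fin m, (((m-1).choose g : ℝ≥0∞) * p) ^ j := by
            refine Finset.sum_congr rfl fun i _ => ?_
            have h := hW j {i}
            rw [Finset.card_singleton] at h
            rw [← h]
            congr 1
            simp
        _ = (m : ℝ≥0∞) * (((m-1).choose g : ℝ≥0∞) * p) ^ j := by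
            rw [Finset.sum_const, Finset.card_univ, Fintype.card_fin, nsmul_eq_mul]
    have htend : Filter.Tendsto (fun j : ℕ => (m : ℝ≥0∞) * (((m-1).choose g : ℝ≥0∞) * p) ^ j)
        Filter.atTop (nhds 0) := by
      have h := ENNReal.tendsto_pow_atTop_nhds_zero_of_lt_one hq1
      have h2 := ENNReal.Tendsto.const_mul h (Or.inr (ENNReal.natCast_ne_top m))
      simpa using h2
    exact le_antisymm (ge_of_tendsto' htend hZle) zero_le
  have hCov0 : ∀ ω, ¬ (∀ i : Fin m, ∃ k, 1 ≤ k ∧ k ≤ 0 ∧ i ∈ G k ω) := by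
    intro ω hc
    obtain ⟨k, h1, h2, _⟩ := hc ⟨0, by omega⟩
    omega
  have hUiff : ∀ n ω, ω ∈ U n ↔ ¬ (∀ i : Fin m, ∃ k, 1 ≤ k ∧ k ≤ n ∧ i ∈ G k ω) := by
    intro n ω
    simp only [hUdef, hVdef, Set.mem_iUnion, Set.mem_setOf_eq, Finset.mem_Icc]
    push_neg
    constructor
    · rintro ⟨i, h⟩
      exact ⟨i, fun k h1 h2 => h k ⟨h1, h2⟩⟩
    · rintro ⟨i, h⟩
      exact ⟨i, fun k hk => h k hk.1 hk.2⟩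
  have haeeq : ∀ n, {ω | n < X ω} =ᵐ[μ] U n := by
    have hsub1 : ∀ n, {ω | n < X ω} ⊆ U n := by
      intro n ω hω
      rw [Set.mem_setOf_eq, hX ω] at hω
      refine (hUiff n ω).mpr fun hc => ?_
      have hn : 1 ≤ n := by
        rcases Nat.eq_zero_or_pos n with h | h
        · exact absurd (h ▸ hc) (hCov0 ω)
        · exact h
      have hle := Nat.sInf_le (show n ∈ {n' | 1 ≤ n' ∧ ∀ i, ∃ k, 1 ≤ k ∧ k ≤ n' ∧ i ∈ G k ω}
        from ⟨hn, hc⟩)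
      omega
    have hsub2 : ∀ n, U n \ {ω | n < X ω} ⊆ ⋂ j, U j := by
      intro n ω hω
      obtain ⟨hU, hX'⟩ := hω
      simp only [Set.mem_setOf_eq, not_lt] at hX'
      rw [hUiff] at hU
      refine Set.mem_iInter.mpr fun j => (hUiff j ω).mpr fun hc => ?_
      have hj : 1 ≤ j := by
        rcases Nat.eq_zero_or_pos j with h | h
        · exact absurd (h ▸ hc) (hCov0 ω)
        · exact h
      have hmem : X ω ∈ {n' | 1 ≤ n' ∧ ∀ i, ∃ k, 1 ≤ k ∧ k ≤ n' ∧ i ∈ G k ω} := by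
        rw [hX ω]
        exact Nat.sInf_mem ⟨j, hj, hc⟩
      refine hU fun i => ?_
      obtain ⟨k, h1, h2, h3⟩ := hmem.2 i
      exact ⟨k, h1, le_trans h2 hX', h3⟩
    intro n
    rw [MeasureTheory.ae_eq_set]
    constructor
    · rw [Set.diff_eq_empty.mpr (hsub1 n)]; exact measure_empty
    · exact measure_mono_null (hsub2 n) hZ
  have hXnm : ∀ n, NullMeasurableSet {ω | n < X ω} μ :=
    fun n => (hUnm n).congr (haeeq n).symm
  have hXae : AEMeasurable X μ := by
    have hXj : ∀ j, NullMeasurableSet {ω | X ω = j} μ := by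
      intro j
      cases j with
      | zero =>
        have h1 : {ω | X ω = 0} = {ω | 0 < X ω}ᶜ := by
          ext ω; simp [Nat.pos_iff_ne_zero]
        rw [h1]; exact (hXnm 0).compl
      | succ j =>
        have h1 : {ω | X ω = j + 1} = {ω | j < X ω} ∩ {ω | j + 1 < X ω}ᶜ := by
          ext ω
          simp only [Set.mem_setOf_eq, Set.mem_inter_iff, Set.mem_compl_iff, not_lt]
          omega
        rw [h1]; exact (hXnm j).inter (hXnm (j+1)).compl
    have hXnull : NullMeasurable X μ := by
      intro s _
      have h1 : X ⁻¹' s = ⋃ j ∈ s, {ω | X ω = j} := by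
        ext ω
        simp only [Set.mem_preimage, Set.mem_iUnion, Set.mem_setOf_eq, exists_prop]
        exact ⟨fun h => ⟨X ω, h, rfl⟩, fun ⟨j, hj, hXj'⟩ => hXj' ▸ hj⟩
      rw [h1]
      exact NullMeasurableSet.biUnion (Set.to_countable s) fun j _ => hXj j
    exact hXnull.aemeasurable
  -- integral identity
  have hint : ∫ ω, (X ω : ℝ) ∂μ = (∑' n, μ {ω | n < X ω}).toReal := by
    have hXsm : AEStronglyMeasurable (fun ω => (X ω : ℝ)) μ :=
      ((measurable_from_top : Measurable (fun n : ℕ => (n:ℝ))).comp_aemeasurable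
        hXae).aestronglyMeasurable
    rw [integral_eq_lintegral_of_nonneg_ae
      (Filter.Eventually.of_forall fun ω => by positivity) hXsm]
    congr 1
    have hof : ∀ ω, ENNReal.ofReal ((X ω : ℝ)) = (X ω : ℝ≥0∞) := fun ω => ENNReal.ofReal_natCast _
    rw [lintegral_congr hof]
    have hpt : ∀ ω, (X ω : ℝ≥0∞)
        = ∑' n : ℕ, Set.indicator {ω' | n < X ω'} (fun _ => (1:ℝ≥0∞)) ω := by
      intro ω
      have h1 : ∀ n : ℕ, Set.indicator {ω' | n < X ω'} (fun _ => (1:ℝ≥0∞)) ω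
          = if n ∈ Finset.range (X ω) then 1 else 0 := by
        intro n; simp [Set.indicator_apply, Finset.mem_range]
      rw [tsum_congr h1, tsum_eq_sum (s := Finset.range (X ω)) (fun n hn => if_neg hn),
        Finset.sum_congr rfl (fun n hn => if_pos hn), Finset.sum_const, Finset.card_range]
      simp
    rw [lintegral_congr hpt,
      lintegral_tsum (fun n => AEMeasurable.indicator₀ aemeasurable_const (hXnm n))]
    exact tsum_congr fun n => by rw [lintegral_indicator_const₀ (hXnm n), one_mul]
  have hFsum : (∑' n, μ {ω | n < X ω}).toReal = ∑' n, F n := by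
    rw [ENNReal.tsum_toReal_eq (fun n => measure_ne_top μ _)]
    exact tsum_congr fun n => by rw [measure_congr (haeeq n)]; exact hUc n
  -- geometric sums
  have hrlt : ∀ j ∈ Finset.Icc 1 m, 0 ≤ r j ∧ r j < 1 := by
    intro j hj
    obtain ⟨hj1, hjm⟩ := Finset.mem_Icc.mp hj
    constructor
    · exact div_nonneg (Nat.cast_nonneg _) (le_of_lt hNr)
    · rw [hrdef]
      rw [div_lt_one hNr]
      have hle : (m - j).choose g ≤ (m-1).choose g := Nat.choose_le_choose g (by omega)
      exact_mod_cast lt_of_le_of_lt hle hlt1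
  have hsum : ∑' n, F n = ∑ j ∈ Finset.Icc 1 m,
      (-1:ℝ)^(j+1) * (m.choose j) * (1 - r j)⁻¹ := by
    rw [hFdef]
    rw [Summable.tsum_finsetSum (fun j hj => by
      obtain ⟨h0, h1⟩ := hrlt j hj
      exact (summable_geometric_of_lt_one h0 h1).mul_left _)]
    refine Finset.sum_congr rfl fun j hj => ?_
    obtain ⟨h0, h1⟩ := hrlt j hj
    simp_rw [mul_assoc]
    rw [tsum_mul_left, tsum_mul_left, tsum_geometric_of_lt_one h0 h1]
  -- final algebra
  rw [hint, hFsum, hsum]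
  have hsplit : Finset.Icc 1 m = Finset.Icc 1 (m-g) ∪ Finset.Icc (m-g+1) m := by
    ext x; simp only [Finset.mem_Icc, Finset.mem_union]; omega
  have hdisj2 : Disjoint (Finset.Icc 1 (m-g)) (Finset.Icc (m-g+1) m) := by
    rw [Finset.disjoint_left]
    intro x hx hx'
    simp only [Finset.mem_Icc] at hx hx'
    omega
  have h1 : ∑ k ∈ Finset.Icc 1 (m-g), (-1:ℝ)^(k+1) * (m.choose k) * (1 - r k)⁻¹
      = ∑ k ∈ Finset.Icc 1 (m-g), (-1:ℝ)^(k+1) * (m.choose k) / (1 - ((m-k).choose g : ℝ) / N) := by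
    refine Finset.sum_congr rfl fun k hk => ?_
    simp only [hrdef, div_eq_mul_inv]
  have h2 : ∑ j ∈ Finset.Icc (m-g+1) m, (-1:ℝ)^(j+1) * (m.choose j) * (1 - r j)⁻¹
      = ∑ k ∈ Finset.Icc 1 g, (-1:ℝ)^(m-g+k+1) * (m.choose (m-g+k)) := by
    refine Finset.sum_nbij' (fun j => j - (m - g)) (fun k => m - g + k) ?_ ?_ ?_ ?_ ?_
    · intro j hj
      simp only [Finset.mem_Icc] at hj ⊢
      omega
    · intro k hk
      simp only [Finset.mem_Icc] at hk ⊢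
      omega
    · intro j hj
      simp only [Finset.mem_Icc] at hj
      show m - g + (j - (m - g)) = j
      omega
    · intro k hk
      simp only [Finset.mem_Icc] at hk
      show m - g + k - (m - g) = k
      omega
    · intro j hj
      simp only [Finset.mem_Icc] at hj
      have hj' : m - g + (j - (m - g)) = j := by omega
      rw [hj']
      have hr0 : r j = 0 := by
        have h0 : (m - j).choose g = 0 := Nat.choose_eq_zero_of_lt (by omega)
        simp [hrdef, h0]
      rw [hr0]
      simp
  rw [hsplit, Finset.sum_union hdisj2, h1, h2]
end

section
/- For a population of N individuals of m types with counts N_1,...,N_m (each N_i ≥ 1, Σ N_i = N), drawing independent samples of size g without replacement (each sample drawn from the full population), the expected number of samples needed to observe every type equals Σ_{∅≠S⊆{1,...,m}} (-1)^{|S|+1}/(1 − P(N − Σ_{i∈S} N_i, g)/P(N,g)), where P(n,k) = n(n−1)···(n−k+1) (with the convention P(n,k)=0 if n < k). -/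
open Finset MeasureTheory ProbabilityTheory

lemma aux_nm {Ω : Type*} [MeasurableSpace Ω] (μ : Measure Ω) [IsProbabilityMeasure μ]
    (s : Set Ω) (h : μ s + μ sᶜ ≤ 1) : NullMeasurableSet s μ := by
  set B := toMeasurable μ s with hB
  set C := toMeasurable μ sᶜ with hC
  have hsB : s ⊆ B := subset_toMeasurable μ s
  have hsC : sᶜ ⊆ C := subset_toMeasurable μ sᶜ
  have hBC : B ∪ C = Set.univ := by
    apply Set.eq_univ_of_univ_subset
    intro x _
    by_cases hx : x ∈ s
    · exact Or.inl (hsB hx)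
    · exact Or.inr (hsC hx)
  have hadd : μ (B ∪ C) + μ (B ∩ C) = μ B + μ C :=
    measure_union_add_inter B (measurableSet_toMeasurable μ sᶜ)
  have h1 : μ (B ∪ C) = 1 := by rw [hBC]; simp
  have h2 : μ B + μ C ≤ 1 := by
    rw [measure_toMeasurable, measure_toMeasurable]; exact h
  have h0 : μ (B ∩ C) = 0 := by
    have := hadd.le.trans h2
    rw [h1] at this
    have h1' : (1 : ENNReal) ≠ ⊤ := ENNReal.one_ne_top
    have := ENNReal.le_of_add_le_add_left h1' (by simpa [add_zero] using this : 1 + μ (B ∩ C) ≤ 1 + 0)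
    exact le_antisymm this zero_le
  refine ⟨B, measurableSet_toMeasurable μ s, ?_⟩
  rw [MeasureTheory.ae_eq_set]
  constructor
  · rw [Set.diff_eq_empty.2 hsB]; simp
  · refine measure_mono_null ?_ h0
    intro x hx
    exact ⟨hx.1, hsC hx.2⟩

lemma aux_ie {Ω : Type*} [MeasurableSpace Ω] (μ : Measure Ω) [IsProbabilityMeasure μ]
    {ι : Type*} [DecidableEq ι] (A : ι → Set Ω) (hA : ∀ i, NullMeasurableSet (A i) μ)
    (s : Finset ι) :
    ∀ B : Set Ω, NullMeasurableSet B μ →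
      ∑ S ∈ s.powerset, (-1:ℝ)^S.card * (μ (B ∩ ⋂ i ∈ S, A i)).toReal
        = (μ (B \ ⋃ i ∈ s, A i)).toReal := by
  induction s using Finset.induction_on with
  | empty =>
    intro B _
    simp
  | @insert a s ha ih =>
    intro B hB
    rw [Finset.sum_powerset_insert ha]
    have key : ∀ S ∈ s.powerset,
        (-1:ℝ)^(insert a S).card * (μ (B ∩ ⋂ i ∈ insert a S, A i)).toReal
        = -((-1:ℝ)^S.card * (μ ((B ∩ A a) ∩ ⋂ i ∈ S, A i)).toReal) := by
      intro S hS
      have haS : a ∉ S := fun h => ha (Finset.mem_powerset.1 hS h)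
      rw [Finset.card_insert_of_notMem haS]
      have : B ∩ ⋂ i ∈ insert a S, A i = (B ∩ A a) ∩ ⋂ i ∈ S, A i := by
        rw [Finset.set_biInter_insert]
        rw [Set.inter_assoc]
      rw [this, pow_succ]
      ring
    rw [Finset.sum_congr rfl key, Finset.sum_neg_distrib]
    rw [ih B hB, ih (B ∩ A a) (hB.inter (hA a))]
    -- now: μ (B \ ⋃ s) - μ ((B ∩ A a) \ ⋃ s) = μ (B \ ⋃ insert a s)
    have hsplit : B \ ⋃ i ∈ (s : Finset ι), A i =
        ((B ∩ A a) \ ⋃ i ∈ s, A i) ∪ (B \ ⋃ i ∈ insert a s, A i) := by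
      rw [Finset.set_biUnion_insert]
      ext ω
      by_cases hω : ω ∈ A a <;> simp [hω]
    have hdisj : Disjoint ((B ∩ A a) \ ⋃ i ∈ s, A i) (B \ ⋃ i ∈ insert a s, A i) := by
      rw [Finset.set_biUnion_insert]
      rw [Set.disjoint_left]
      intro ω h1 h2
      exact h2.2 (Or.inl h1.1.2)
    have hnm2 : NullMeasurableSet (B \ ⋃ i ∈ insert a s, A i) μ := by
      refine hB.diff ?_
      exact (NullMeasurableSet.biUnion (Finset.countable_toSet _) (fun i _ => hA i))
    have hμ : μ (B \ ⋃ i ∈ (s : Finset ι), A i) =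
        μ ((B ∩ A a) \ ⋃ i ∈ s, A i) + μ (B \ ⋃ i ∈ insert a s, A i) := by
      rw [hsplit]
      exact measure_union₀ hnm2 hdisj.aedisjoint
    have := congrArg ENNReal.toReal hμ
    rw [ENNReal.toReal_add (measure_ne_top μ _) (measure_ne_top μ _)] at this
    rw [this]
    ring

lemma aux_ie' {Ω : Type*} [MeasurableSpace Ω] (μ : Measure Ω) [IsProbabilityMeasure μ]
    {ι : Type*} [DecidableEq ι] (A : ι → Set Ω) (hA : ∀ i, NullMeasurableSet (A i) μ)
    (s : Finset ι) :
    (μ (⋃ i ∈ s, A i)).toReal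
      = ∑ S ∈ s.powerset.filter Finset.Nonempty,
          (-1:ℝ)^(S.card+1) * (μ (⋂ i ∈ S, A i)).toReal := by
  have h := aux_ie μ A hA s Set.univ MeasurableSet.univ.nullMeasurableSet
  have hU : NullMeasurableSet (⋃ i ∈ s, A i) μ :=
    NullMeasurableSet.biUnion (Finset.countable_toSet _) (fun i _ => hA i)
  have hcompl : (μ (Set.univ \ ⋃ i ∈ s, A i)).toReal = 1 - (μ (⋃ i ∈ s, A i)).toReal := by
    rw [Set.diff_eq, Set.univ_inter]
    rw [measure_compl₀ hU (measure_ne_top μ _)]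
    rw [measure_univ, ENNReal.toReal_sub_of_le prob_le_one ENNReal.one_ne_top]
    simp
  rw [hcompl] at h
  have hsplit : ∑ S ∈ s.powerset, (-1:ℝ)^S.card * (μ (Set.univ ∩ ⋂ i ∈ S, A i)).toReal
      = 1 + ∑ S ∈ s.powerset.filter Finset.Nonempty,
          (-1:ℝ)^S.card * (μ (⋂ i ∈ S, A i)).toReal := by
    rw [← Finset.sum_filter_add_sum_filter_not s.powerset Finset.Nonempty]
    have : s.powerset.filter (fun S => ¬ S.Nonempty) = {∅} := by
      ext S
      simp only [Finset.mem_filter, Finset.mem_powerset, Finset.not_nonempty_iff_eq_empty,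
        Finset.mem_singleton]
      constructor
      · rintro ⟨_, h2⟩; exact h2
      · rintro rfl; exact ⟨Finset.empty_subset s, rfl⟩
    rw [this]
    simp only [Set.univ_inter]
    rw [Finset.sum_singleton]
    simp [add_comm]
  rw [hsplit] at h
  have : ∑ S ∈ s.powerset.filter Finset.Nonempty,
      (-1:ℝ)^(S.card+1) * (μ (⋂ i ∈ S, A i)).toReal
      = - ∑ S ∈ s.powerset.filter Finset.Nonempty,
          (-1:ℝ)^S.card * (μ (⋂ i ∈ S, A i)).toReal := by
    rw [← Finset.sum_neg_distrib]
    refine Finset.sum_congr rfl fun S _ => ?_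
    rw [pow_succ]; ring
  rw [this]
  linarith

/-- Expected number of independent samples of size `g`, drawn without replacement from a
population of `N` individuals of `m` types with counts `N₁,...,N_m ≥ 1`, needed to
observe every type: it equals
`∑_{∅≠S⊆{1,...,m}} (-1)^(|S|+1)/(1 - P(N - ∑_{i∈S} Nᵢ, g)/P(N,g))`,
where `P(n,k)` is the falling factorial. -/
theorem stmt_14 {Ω : Type*} [MeasurableSpace Ω] (μ : Measure Ω) [IsProbabilityMeasure μ]
    {N m g : ℕ} (hm : 0 < m) (hg1 : 1 ≤ g) (hgN : g < N)
    (t : Fin N → Fin m) (Nc : Fin m → ℕ)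
    (hNc : ∀ i, Nc i = ((Finset.univ : Finset (Fin N)).filter (fun x => t x = i)).card)
    (hNc1 : ∀ i, 1 ≤ Nc i)
    (G : ℕ → Ω → Finset (Fin N)) (hcard : ∀ n ω, (G n ω).card = g)
    (hindep : iIndepFun (m := fun _ => (⊤ : MeasurableSpace (Finset (Fin N)))) G μ)
    (hunif : ∀ n, 1 ≤ n → ∀ A : Finset (Fin N), A.card = g →
      μ {ω | G n ω = A} = ENNReal.ofReal (1 / (N.choose g)))
    (X : Ω → ℕ)
    (hX : ∀ ω, X ω = sInf {n | 1 ≤ n ∧ ∀ i : Fin m, ∃ k, 1 ≤ k ∧ k ≤ n ∧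
      ∃ x ∈ G k ω, t x = i}) :
    ∫ ω, (X ω : ℝ) ∂μ =
      ∑ S ∈ ((Finset.univ : Finset (Fin m)).powerset.filter Finset.Nonempty),
        (-1 : ℝ) ^ (S.card + 1) /
          (1 - (Nat.descFactorial (N - ∑ i ∈ S, Nc i) g : ℝ) /
            (Nat.descFactorial N g : ℝ)) := by
  classical
  -- basic constants
  set C : ℕ := N.choose g with hC
  have hCpos : 0 < C := Nat.choose_pos hgN.le
  have hmem : ∀ k ω, G k ω ∈ Finset.powersetCard g (Finset.univ : Finset (Fin N)) := by
    intro k ω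
    rw [Finset.mem_powersetCard]
    exact ⟨Finset.subset_univ _, hcard k ω⟩
  -- single-sample probability of an arbitrary event
  have hsingle : ∀ A : Finset (Fin N), A.card = g → ∀ k, 1 ≤ k →
      μ {ω | G k ω = A} = (1 : ENNReal) / C := by
    intro A hA k hk
    rw [hunif k hk A hA]
    rw [ENNReal.ofReal_div_of_pos (by exact_mod_cast hCpos)]
    simp
  have key : ∀ k, 1 ≤ k → ∀ 𝒜 : Finset (Finset (Fin N)),
      𝒜 ⊆ Finset.powersetCard g Finset.univ →
      μ (G k ⁻¹' ↑𝒜) = (𝒜.card : ENNReal) / C := by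
    have hcardC : (Finset.powersetCard g (Finset.univ : Finset (Fin N))).card = C := by
      rw [Finset.card_powersetCard, Finset.card_univ, Fintype.card_fin]
    have hub : ∀ k, 1 ≤ k → ∀ ℬ : Finset (Finset (Fin N)),
        ℬ ⊆ Finset.powersetCard g Finset.univ →
        μ (G k ⁻¹' ↑ℬ) ≤ (ℬ.card : ENNReal) / C := by
      intro k hk ℬ hℬ
      have hre : G k ⁻¹' ↑ℬ = ⋃ A ∈ ℬ, {ω | G k ω = A} := by
        ext ω; simp [Set.mem_preimage]
      rw [hre]
      calc μ (⋃ A ∈ ℬ, {ω | G k ω = A}) ≤ ∑ A ∈ ℬ, μ {ω | G k ω = A} :=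
            measure_biUnion_finset_le _ _
        _ = ∑ _A ∈ ℬ, (1 : ENNReal) / C := by
            refine Finset.sum_congr rfl fun A hA => ?_
            exact hsingle A (Finset.mem_powersetCard.1 (hℬ hA)).2 k hk
        _ = (ℬ.card : ENNReal) / C := by
            rw [Finset.sum_const, nsmul_eq_mul, mul_one_div]
    intro k hk 𝒜 h𝒜
    have haC : 𝒜.card ≤ C := hcardC ▸ Finset.card_le_card h𝒜
    set ℬ := Finset.powersetCard g (Finset.univ : Finset (Fin N)) \ 𝒜 with hℬdef
    have hcompl : (G k ⁻¹' ↑𝒜)ᶜ = G k ⁻¹' ↑ℬ := by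
      ext ω
      simp only [Set.mem_compl_iff, Set.mem_preimage, Finset.coe_sdiff, Set.mem_diff,
        Finset.mem_coe, hℬdef]
      have := hmem k ω
      tauto
    have hℬcard : ℬ.card = C - 𝒜.card := by
      rw [Finset.card_sdiff_of_subset h𝒜, hcardC]
    have hsum : (𝒜.card : ENNReal)/C + ((C - 𝒜.card : ℕ) : ENNReal)/C = 1 := by
      rw [ENNReal.div_add_div_same, ← Nat.cast_add]
      have : 𝒜.card + (C - 𝒜.card) = C := by omega
      rw [this, ENNReal.div_self (by exact_mod_cast hCpos.ne') (ENNReal.natCast_ne_top C)]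
    have hlb : (𝒜.card : ENNReal)/C ≤ μ (G k ⁻¹' ↑𝒜) := by
      have h1 : (1 : ENNReal) ≤ μ (G k ⁻¹' ↑𝒜) + ((C - 𝒜.card : ℕ) : ENNReal)/C := by
        have hsplit : (1 : ENNReal) = μ Set.univ := (measure_univ).symm
        rw [hsplit, ← Set.union_compl_self (G k ⁻¹' ↑𝒜)]
        refine le_trans (measure_union_le _ _) ?_
        refine add_le_add le_rfl ?_
        rw [hcompl]
        have := hub k hk ℬ Finset.sdiff_subset
        rwa [hℬcard] at this
      rw [← hsum] at h1
      have hne : ((C - 𝒜.card : ℕ) : ENNReal)/C ≠ ⊤ :=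
        (ENNReal.div_lt_top (ENNReal.natCast_ne_top _) (by exact_mod_cast hCpos.ne')).ne
      exact ENNReal.le_of_add_le_add_right hne h1
    exact le_antisymm (hub k hk 𝒜 h𝒜) hlb
  have hcardC : (Finset.powersetCard g (Finset.univ : Finset (Fin N))).card = C := by
    rw [Finset.card_powersetCard, Finset.card_univ, Fintype.card_fin]
  -- predicate version
  have keyP : ∀ (P : Finset (Fin N) → Prop), ∀ k, 1 ≤ k →
      μ {ω | P (G k ω)}
        = (((Finset.powersetCard g Finset.univ).filter P).card : ENNReal) / C := by
    intro P k hk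
    have hre : {ω | P (G k ω)} = G k ⁻¹' ↑((Finset.powersetCard g Finset.univ).filter P) := by
      ext ω
      simp only [Set.mem_setOf_eq, Set.mem_preimage, Finset.mem_coe, Finset.mem_filter]
      exact ⟨fun h => ⟨hmem k ω, h⟩, fun h => h.2⟩
    rw [hre]
    exact key k hk _ (Finset.filter_subset _ _)
  have keyNM : ∀ (P : Finset (Fin N) → Prop), ∀ k, 1 ≤ k →
      NullMeasurableSet {ω | P (G k ω)} μ := by
    intro P k hk
    apply aux_nm
    have h2 : {ω | P (G k ω)}ᶜ = {ω | (¬ P (G k ω))} := rfl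
    rw [keyP P k hk, h2, keyP (fun A => ¬ P A) k hk]
    rw [ENNReal.div_add_div_same, ← Nat.cast_add]
    rw [Finset.card_filter_add_card_filter_not, hcardC]
    rw [ENNReal.div_self (by exact_mod_cast hCpos.ne') (ENNReal.natCast_ne_top C)]
  -- type-class of individuals of types in S
  set T : Finset (Fin m) → Finset (Fin N) :=
    fun S => Finset.univ.filter (fun x => t x ∈ S) with hT
  have hTcard : ∀ S : Finset (Fin m), (T S).card = ∑ i ∈ S, Nc i := by
    intro S
    have hre : T S = S.biUnion (fun i => Finset.univ.filter (fun x => t x = i)) := by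
      ext x
      simp [hT]
    rw [hre, Finset.card_biUnion]
    · exact Finset.sum_congr rfl fun i _ => (hNc i).symm
    · intro i _ j _ hij
      simp only [Finset.disjoint_left, Finset.mem_filter, Finset.mem_univ, true_and]
      rintro x rfl h
      exact hij h
  have hsum_le : ∀ S : Finset (Fin m), ∑ i ∈ S, Nc i ≤ N := by
    intro S
    rw [← hTcard]
    calc (T S).card ≤ (Finset.univ : Finset (Fin N)).card :=
          Finset.card_le_card (Finset.filter_subset _ _)
      _ = N := by rw [Finset.card_univ, Fintype.card_fin]
  have hsum_pos : ∀ S : Finset (Fin m), S.Nonempty → 1 ≤ ∑ i ∈ S, Nc i := by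
    rintro S ⟨i, hi⟩
    calc 1 ≤ Nc i := hNc1 i
      _ ≤ ∑ j ∈ S, Nc j := Finset.single_le_sum (fun _ _ => Nat.zero_le _) hi
  have hchoose_lt : ∀ S : Finset (Fin m), S.Nonempty →
      (N - ∑ i ∈ S, Nc i).choose g < C := by
    intro S hS
    obtain ⟨N', rfl⟩ : ∃ N', N = N' + 1 := ⟨N - 1, by omega⟩
    obtain ⟨g', rfl⟩ : ∃ g', g = g' + 1 := ⟨g - 1, by omega⟩
    have hs1 : 1 ≤ ∑ i ∈ S, Nc i := hsum_pos S hS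
    calc (N' + 1 - ∑ i ∈ S, Nc i).choose (g' + 1)
        ≤ N'.choose (g' + 1) := Nat.choose_le_choose _ (by omega)
      _ < (N' + 1).choose (g' + 1) := by
          rw [Nat.choose_succ_succ]
          have hpos : 0 < N'.choose g' := Nat.choose_pos (by omega)
          simp only [Nat.succ_eq_add_one]
          omega
  -- avoidance probabilities
  set q : Finset (Fin m) → ENNReal :=
    fun S => ((N - ∑ i ∈ S, Nc i).choose g : ENNReal) / C with hqdef
  set qr : Finset (Fin m) → ℝ :=
    fun S => ((N - ∑ i ∈ S, Nc i).choose g : ℝ) / C with hqrdef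
  have hq_toReal : ∀ S, (q S).toReal = qr S := by
    intro S
    rw [hqdef, hqrdef]
    simp [ENNReal.toReal_div]
  have hqr_nonneg : ∀ S, 0 ≤ qr S := by
    intro S
    exact div_nonneg (Nat.cast_nonneg _) (Nat.cast_nonneg _)
  have hqr_lt1 : ∀ S : Finset (Fin m), S.Nonempty → qr S < 1 := by
    intro S hS
    rw [hqrdef]
    rw [div_lt_one (by exact_mod_cast hCpos)]
    exact_mod_cast hchoose_lt S hS
  have hq_ne_top : ∀ S, q S ≠ ⊤ := by
    intro S
    exact (ENNReal.div_lt_top (ENNReal.natCast_ne_top _) (by exact_mod_cast hCpos.ne')).ne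
  -- the avoidance events
  set D : Finset (Fin m) → Set (Finset (Fin N)) :=
    fun S => {A | ∀ x ∈ A, t x ∉ S} with hD
  set Miss : ℕ → Finset (Fin m) → Set Ω :=
    fun n S => ⋂ k ∈ Finset.Icc 1 n, G k ⁻¹' (D S) with hMiss
  have hqS : ∀ S : Finset (Fin m), ∀ k, 1 ≤ k → μ (G k ⁻¹' (D S)) = q S := by
    intro S k hk
    have h0 := keyP (fun A => ∀ x ∈ A, t x ∉ S) k hk
    rw [Finset.filter_congr_decidable] at h0
    rw [show G k ⁻¹' (D S) = {ω | ∀ x ∈ G k ω, t x ∉ S} from rfl, h0]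
    have hset : (Finset.powersetCard g (Finset.univ : Finset (Fin N))).filter
          (fun A => ∀ x ∈ A, t x ∉ S)
        = Finset.powersetCard g (T S)ᶜ := by
      ext A
      have hmemT : ∀ x, x ∈ T S ↔ t x ∈ S := by
        intro x
        simp [hT]
      constructor
      · intro hA
        rw [Finset.mem_filter, Finset.mem_powersetCard] at hA
        rw [Finset.mem_powersetCard]
        obtain ⟨⟨_, hc⟩, hav⟩ := hA
        refine ⟨fun x hx => ?_, hc⟩
        rw [Finset.mem_compl, hmemT]
        exact hav x hx
      · intro hA
        rw [Finset.mem_powersetCard] at hA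
        rw [Finset.mem_filter, Finset.mem_powersetCard]
        obtain ⟨hsub, hc⟩ := hA
        refine ⟨⟨Finset.subset_univ _, hc⟩, fun x hx => ?_⟩
        have h2 := hsub hx
        rw [Finset.mem_compl, hmemT] at h2
        exact h2
    rw [hset, Finset.card_powersetCard, Finset.card_compl, hTcard, Fintype.card_fin, hqdef]
  have hMissμ : ∀ n (S : Finset (Fin m)), μ (Miss n S) = q S ^ n := by
    intro n S
    have hind := hindep.measure_inter_preimage_eq_mul (Finset.Icc 1 n)
      (sets := fun _ => D S) (fun i _ => trivial)
    rw [hMiss]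
    simp only []
    rw [hind, Finset.prod_congr rfl (fun k hk => hqS S k (Finset.mem_Icc.1 hk).1),
      Finset.prod_const, Nat.card_Icc]
    simp
  have hMissNM : ∀ n (S : Finset (Fin m)), NullMeasurableSet (Miss n S) μ := by
    intro n S
    exact NullMeasurableSet.biInter (Finset.Icc 1 n).countable_toSet
      (fun k hk => keyNM (fun A => ∀ x ∈ A, t x ∉ S) k (Finset.mem_Icc.1 hk).1)
  -- the "all types seen by time n" events
  set Seen : ℕ → Set Ω :=
    fun n => {ω | ∀ i : Fin m, ∃ k, 1 ≤ k ∧ k ≤ n ∧ ∃ x ∈ G k ω, t x = i} with hSeen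
  have hSeen_compl : ∀ n, (Seen n)ᶜ = ⋃ i ∈ (Finset.univ : Finset (Fin m)), Miss n {i} := by
    intro n
    ext ω
    simp only [hSeen, hMiss, hD, Set.mem_compl_iff, Set.mem_setOf_eq, Set.mem_iUnion,
      Set.mem_iInter, Set.mem_preimage, Finset.mem_Icc, Finset.mem_singleton,
      Finset.mem_univ, exists_true_left]
    push_neg
    constructor
    · rintro ⟨i, hi⟩
      exact ⟨i, fun k hk x hx => hi k hk.1 hk.2 x hx⟩
    · rintro ⟨i, hi⟩
      exact ⟨i, fun k hk1 hk2 x hx => hi k ⟨hk1, hk2⟩ x hx⟩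
  have hMiss_inter : ∀ n (S : Finset (Fin m)),
      ⋂ i ∈ S, Miss n {i} = Miss n S := by
    intro n S
    ext ω
    simp only [hMiss, hD, Set.mem_iInter, Set.mem_preimage, Set.mem_setOf_eq,
      Finset.mem_singleton]
    constructor
    · intro h k hk x hx hmemS
      exact h (t x) hmemS k hk x hx rfl
    · intro h i hi k hk x hx hti
      rw [← hti] at hi
      exact h k hk x hx hi
  have hSeen_mono : ∀ {a b : ℕ}, a ≤ b → Seen a ⊆ Seen b := by
    intro a b hab ω hω i
    obtain ⟨k, h1, h2, hx⟩ := hω i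
    exact ⟨k, h1, h2.trans hab, hx⟩
  have hqlt : ∀ S : Finset (Fin m), S.Nonempty → q S < 1 := by
    intro S hS
    rw [hqdef, ENNReal.div_lt_iff (Or.inl (by exact_mod_cast hCpos.ne'))
      (Or.inl (ENNReal.natCast_ne_top C)), one_mul]
    exact_mod_cast hchoose_lt S hS
  set U : Set Ω := ⋃ j, Seen j with hUdef
  have hUc : μ Uᶜ = 0 := by
    have hle : ∀ j : ℕ, μ Uᶜ ≤ ∑ i : Fin m, q {i} ^ j := by
      intro j
      have h1 : Uᶜ ⊆ (Seen j)ᶜ := Set.compl_subset_compl.2 (Set.subset_iUnion Seen j)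
      refine le_trans (measure_mono h1) ?_
      rw [hSeen_compl j]
      refine le_trans (measure_biUnion_finset_le _ _) ?_
      exact le_of_eq (Finset.sum_congr rfl fun i _ => hMissμ j {i})
    have hreal : ∀ j : ℕ, (μ Uᶜ).toReal ≤ ∑ i : Fin m, qr {i} ^ j := by
      intro j
      have h2 := ENNReal.toReal_mono (by
        refine (ENNReal.sum_lt_top.2 fun i _ => ?_).ne
        exact (ENNReal.pow_lt_top (lt_of_le_of_ne le_top (hq_ne_top _)))) (hle j)
      refine le_trans h2 (le_of_eq ?_)
      rw [ENNReal.toReal_sum (fun i _ =>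
        (ENNReal.pow_lt_top (lt_of_le_of_ne le_top (hq_ne_top _))).ne)]
      exact Finset.sum_congr rfl fun i _ => by rw [ENNReal.toReal_pow, hq_toReal]
    have h0 : Filter.Tendsto (fun j => ∑ i : Fin m, qr {i} ^ j)
        Filter.atTop (nhds 0) := by
      have hi : ∀ i : Fin m, Filter.Tendsto (fun j => qr {i} ^ j) Filter.atTop (nhds 0) :=
        fun i => tendsto_pow_atTop_nhds_zero_of_lt_one (hqr_nonneg _)
          (hqr_lt1 _ ⟨i, Finset.mem_singleton_self i⟩)
      have := tendsto_finset_sum (Finset.univ : Finset (Fin m)) (fun i _ => hi i)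
      simpa using this
    have hle0 : (μ Uᶜ).toReal ≤ 0 := ge_of_tendsto' h0 hreal
    have : (μ Uᶜ).toReal = 0 := le_antisymm hle0 ENNReal.toReal_nonneg
    rw [ENNReal.toReal_eq_zero_iff] at this
    rcases this with h | h
    · exact h
    · exact absurd h (measure_ne_top μ _)
  -- identify {n < X} with (Seen n)ᶜ up to null sets
  have hseq : ∀ n : ℕ, {ω | n < X ω} ∩ U = (Seen n)ᶜ ∩ U := by
    intro n
    ext ω
    simp only [Set.mem_inter_iff, Set.mem_setOf_eq, Set.mem_compl_iff, hUdef, Set.mem_iUnion]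
    have hXω : X ω = sInf {n' | 1 ≤ n' ∧ ω ∈ Seen n'} := hX ω
    have hSeen0 : ω ∉ Seen 0 := by
      intro h0
      obtain ⟨k, hk1, hk0, -⟩ := h0 ⟨0, hm⟩
      omega
    constructor
    · rintro ⟨hn, j, hj⟩
      refine ⟨fun hSeenn => ?_, j, hj⟩
      have hn0 : 1 ≤ n := by
        rcases Nat.eq_zero_or_pos n with rfl | h
        · exact (hSeen0 hSeenn).elim
        · exact h
      have hXle : X ω ≤ n := by
        rw [hXω]
        exact Nat.sInf_le ⟨hn0, hSeenn⟩
      omega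
    · rintro ⟨hns, j, hj⟩
      refine ⟨?_, j, hj⟩
      have hj1 : 1 ≤ j := by
        rcases Nat.eq_zero_or_pos j with rfl | h
        · exact absurd hj hSeen0
        · exact h
      have hne : {n' | 1 ≤ n' ∧ ω ∈ Seen n'}.Nonempty := ⟨j, hj1, hj⟩
      have hmem' := Nat.sInf_mem hne
      rw [← hXω] at hmem'
      by_contra hcon
      push_neg at hcon
      exact hns (hSeen_mono hcon hmem'.2)
  have hlt : ∀ n : ℕ, μ {ω | n < X ω} = μ ((Seen n)ᶜ) := by
    intro n
    rw [← measure_inter_conull hUc, hseq n, measure_inter_conull hUc]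
  -- inclusion-exclusion
  have hSeenμ : ∀ n : ℕ, (μ ((Seen n)ᶜ)).toReal
      = ∑ S ∈ (Finset.univ : Finset (Fin m)).powerset.filter Finset.Nonempty,
          (-1:ℝ)^(S.card+1) * qr S ^ n := by
    intro n
    rw [hSeen_compl n]
    rw [aux_ie' μ (fun i => Miss n {i}) (fun i => hMissNM n {i}) Finset.univ]
    refine Finset.sum_congr rfl fun S hS => ?_
    rw [hMiss_inter n S, hMissμ n S, ENNReal.toReal_pow, hq_toReal]
  -- null measurability of the level sets of X
  have hXNM : ∀ n : ℕ, NullMeasurableSet {ω | n < X ω} μ := by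
    intro n
    have hSNM : NullMeasurableSet ((Seen n)ᶜ) μ := by
      rw [hSeen_compl n]
      exact NullMeasurableSet.biUnion (Finset.countable_toSet _) fun i _ => hMissNM n {i}
    refine hSNM.congr ?_
    rw [MeasureTheory.ae_eq_set]
    constructor
    · refine measure_mono_null ?_ hUc
      intro ω hω
      intro hU
      have := (hseq n).symm ▸ (Set.mem_inter hω.1 hU)
      exact hω.2 ((Set.mem_inter_iff _ _ _).1 this).1
    · refine measure_mono_null ?_ hUc
      intro ω hω
      intro hU
      have := (hseq n) ▸ (Set.mem_inter hω.1 hU)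
      exact hω.2 ((Set.mem_inter_iff _ _ _).1 this).1
  have hXaem : AEMeasurable X μ := by
    have hnull : NullMeasurable X μ := by
      intro s _
      have hre : X ⁻¹' s = ⋃ n ∈ s, {ω | X ω = n} := by
        ext ω
        simp
      rw [hre]
      refine NullMeasurableSet.biUnion (Set.to_countable s) fun n _ => ?_
      match n with
      | 0 =>
        have hre2 : {ω | X ω = 0} = {ω | 0 < X ω}ᶜ := by
          ext ω
          simp [Nat.pos_iff_ne_zero]
        rw [hre2]
        exact (hXNM 0).compl
      | (n' + 1) =>
        have hre2 : {ω | X ω = n' + 1} = {ω | n' < X ω} \ {ω | n' + 1 < X ω} := by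
          ext ω
          simp only [Set.mem_setOf_eq, Set.mem_diff]
          omega
        rw [hre2]
        exact (hXNM n').diff (hXNM (n' + 1))
    exact hnull.aemeasurable
  -- the lintegral as a sum of tail probabilities
  have hlint : ∫⁻ ω, (X ω : ENNReal) ∂μ = ∑' n : ℕ, μ {ω | n < X ω} := by
    have hpt : ∀ ω, (X ω : ENNReal)
        = ∑' n : ℕ, Set.indicator {ω' | n < X ω'} (fun _ => (1:ENNReal)) ω := by
      intro ω
      have h0 : ∀ n ∉ Finset.range (X ω),
          Set.indicator {ω' | n < X ω'} (fun _ => (1:ENNReal)) ω = 0 := by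
        intro n hn
        rw [Finset.mem_range, not_lt] at hn
        apply Set.indicator_of_notMem
        simp only [Set.mem_setOf_eq, not_lt]
        exact hn
      rw [tsum_eq_sum h0]
      have h1 : ∀ n ∈ Finset.range (X ω),
          Set.indicator {ω' | n < X ω'} (fun _ => (1:ENNReal)) ω = 1 := by
        intro n hn
        rw [Finset.mem_range] at hn
        exact Set.indicator_of_mem hn (fun _ => (1:ENNReal))
      rw [Finset.sum_congr rfl h1, Finset.sum_const, Finset.card_range, nsmul_eq_mul, mul_one]
    calc ∫⁻ ω, (X ω : ENNReal) ∂μ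
        = ∫⁻ ω, ∑' n : ℕ, Set.indicator {ω' | n < X ω'} (fun _ => (1:ENNReal)) ω ∂μ :=
          lintegral_congr hpt
      _ = ∑' n : ℕ, ∫⁻ ω, Set.indicator {ω' | n < X ω'} (fun _ => (1:ENNReal)) ω ∂μ :=
          lintegral_tsum fun n => aemeasurable_const.indicator₀ (hXNM n)
      _ = ∑' n : ℕ, μ {ω | n < X ω} := by
          refine tsum_congr fun n => ?_
          rw [lintegral_indicator₀ (hXNM n), setLIntegral_one]
  -- finiteness
  have hfin : (∑' n : ℕ, μ {ω | n < X ω}) ≠ ⊤ := by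
    have hb : ∀ n : ℕ, μ {ω | n < X ω} ≤ ∑ i : Fin m, q {i} ^ n := by
      intro n
      rw [hlt n, hSeen_compl n]
      refine le_trans (measure_biUnion_finset_le _ _) ?_
      exact le_of_eq (Finset.sum_congr rfl fun i _ => hMissμ n {i})
    refine ne_top_of_le_ne_top ?_ (ENNReal.tsum_le_tsum hb)
    have hswap : ∑' n : ℕ, ∑ i : Fin m, q {i} ^ n = ∑ i : Fin m, ∑' n : ℕ, q {i} ^ n :=
      Summable.tsum_finsetSum fun i _ => ENNReal.summable
    rw [hswap]
    refine (ENNReal.sum_lt_top.2 fun i _ => ?_).ne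
    rw [ENNReal.tsum_geometric]
    exact ENNReal.inv_lt_top.2 (tsub_pos_of_lt (hqlt {i} ⟨i, Finset.mem_singleton_self i⟩))
  -- final assembly
  have hXr : AEStronglyMeasurable (fun ω => (X ω : ℝ)) μ :=
    (Measurable.comp_aemeasurable measurable_from_top hXaem).aestronglyMeasurable
  rw [MeasureTheory.integral_eq_lintegral_of_nonneg_ae
    (Filter.Eventually.of_forall fun ω => Nat.cast_nonneg _) hXr]
  have hcast : ∀ ω, ENNReal.ofReal ((X ω : ℝ)) = (X ω : ENNReal) :=
    fun ω => ENNReal.ofReal_natCast _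
  rw [lintegral_congr hcast, hlint, ENNReal.tsum_toReal_eq (fun n => measure_ne_top μ _)]
  have hterm : ∀ n : ℕ, (μ {ω | n < X ω}).toReal
      = ∑ S ∈ (Finset.univ : Finset (Fin m)).powerset.filter Finset.Nonempty,
          (-1:ℝ)^(S.card+1) * qr S ^ n := by
    intro n
    rw [hlt n, hSeenμ n]
  rw [tsum_congr hterm]
  rw [Summable.tsum_finsetSum (f := fun (S : Finset (Fin m)) (n : ℕ) => (-1:ℝ)^(S.card+1) * qr S ^ n)
    (fun S hS => Summable.mul_left _
      (summable_geometric_of_lt_one (hqr_nonneg S) (hqr_lt1 S (Finset.mem_filter.1 hS).2)))]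
  refine Finset.sum_congr rfl fun S hS => ?_
  have hSne : S.Nonempty := (Finset.mem_filter.1 hS).2
  rw [tsum_mul_left, tsum_geometric_of_lt_one (hqr_nonneg S) (hqr_lt1 S hSne)]
  have hratio : qr S
      = ((N - ∑ i ∈ S, Nc i).descFactorial g : ℝ) / (N.descFactorial g : ℝ) := by
    rw [hqrdef]
    have h1 : ((N - ∑ i ∈ S, Nc i).descFactorial g : ℝ)
        = (g.factorial : ℝ) * ((N - ∑ i ∈ S, Nc i).choose g : ℝ) := by
      exact_mod_cast congrArg (Nat.cast : ℕ → ℝ)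
        (Nat.descFactorial_eq_factorial_mul_choose _ g)
    have h2 : ((N.descFactorial g : ℝ)) = (g.factorial : ℝ) * (C : ℝ) := by
      exact_mod_cast congrArg (Nat.cast : ℕ → ℝ)
        (Nat.descFactorial_eq_factorial_mul_choose N g)
    rw [h1, h2, mul_div_mul_left _ _ (by positivity : (g.factorial : ℝ) ≠ 0)]
  rw [← hratio, div_eq_mul_inv]
end
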